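/- Every nonzero vector v ∈ F_4^n is contained in exactly L(n,t) = ∏_{r=1}^{t-1} (2^{2(n-r)} - 1)/(2^r - 1) additive self-orthogonal codes of size 2^t over F_4 (with respect to the trace inner product). -/

import Mathlib

/-- The trace inner product `v * w = Tr_{F₄/F₂}(Σᵢ vᵢ conj(wᵢ))` on `F₄ⁿ`,
with `conj x = x²` and `Tr x = x + x²` (valued in the prime subfield of `F₄`). -/
noncomputable def traceIP {n : ℕ} (v w : Fin n → GaloisField 2 2) : GaloisField 2 2 :=
  (∑ i, v i * (w i)^2) + (∑ i, v i * (w i)^2)^2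

/-- An additive (`F₂`-linear) code `C ⊆ F₄ⁿ` is self-orthogonal if `v * w = 0`
for all `v, w ∈ C`. -/
def IsSelfOrthogonal {n : ℕ} (C : Submodule (ZMod 2) (Fin n → GaloisField 2 2)) : Prop :=
  ∀ v ∈ C, ∀ w ∈ C, traceIP v w = 0

namespace SOCaux

open Module Finset

abbrev F := ZMod 2
abbrev K := GaloisField 2 2
abbrev V (n : ℕ) := Fin n → K

lemma card_K : Nat.card K = 4 := by
  rw [GaloisField.card] <;> norm_num

noncomputable instance : Fintype K := Fintype.ofFinite K

lemma fintype_card_K : Fintype.card K = 4 := by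
  rw [← Nat.card_eq_fintype_card]; exact card_K

lemma pow_four (x : K) : x ^ 4 = x := by
  have h := FiniteField.pow_card x
  rwa [fintype_card_K] at h

lemma sq_sq (x : K) : (x ^ 2) ^ 2 = x := by
  rw [← pow_mul]; exact pow_four x

variable {n : ℕ}

lemma traceIP_swap (v w : V n) : traceIP w v = traceIP v w := by
  unfold traceIP
  have h : (∑ i, w i * v i ^ 2) = (∑ i, v i * w i ^ 2) ^ 2 := by
    rw [CharTwo.sum_sq]
    refine Finset.sum_congr rfl fun i _ => ?_
    rw [mul_pow, sq_sq]
    ring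
  rw [h, sq_sq, add_comm]

lemma traceIP_self (v : V n) : traceIP v v = 0 := by
  unfold traceIP
  have h : (∑ i, v i * v i ^ 2) ^ 2 = ∑ i, v i * v i ^ 2 := by
    rw [CharTwo.sum_sq]
    refine Finset.sum_congr rfl fun i _ => ?_
    rw [mul_pow, sq_sq]
    nth_rewrite 2 [← sq_sq (v i)]
    rw [sq_sq]
    ring
  rw [h]; exact CharTwo.add_self_eq_zero _

lemma traceIP_sq (v w : V n) : traceIP v w ^ 2 = traceIP v w := by
  unfold traceIP
  rw [CharTwo.add_sq, sq_sq, add_comm]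

lemma traceIP_zero_or_one (v w : V n) : traceIP v w = 0 ∨ traceIP v w = 1 := by
  have h := traceIP_sq v w
  have : traceIP v w * (traceIP v w - 1) = 0 := by linear_combination h
  rcases mul_eq_zero.mp this with h' | h'
  · exact Or.inl h'
  · exact Or.inr (by linear_combination h')


lemma traceIP_add_left (u v w : V n) :
    traceIP (u + v) w = traceIP u w + traceIP v w := by
  unfold traceIP
  have h : (∑ i, (u + v) i * w i ^ 2) = (∑ i, u i * w i ^ 2) + (∑ i, v i * w i ^ 2) := by
    rw [← Finset.sum_add_distrib]
    exact Finset.sum_congr rfl fun i _ => by simp [add_mul]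
  rw [h, CharTwo.add_sq]; ring

lemma traceIP_add_right (u v w : V n) :
    traceIP u (v + w) = traceIP u v + traceIP u w := by
  rw [traceIP_swap, traceIP_add_left, traceIP_swap v u, traceIP_swap w u]

lemma traceIP_zero_left (w : V n) : traceIP 0 w = 0 := by
  simp [traceIP]

open scoped Classical in
/-- the trace form as a `ZMod 2`-valued function -/
noncomputable def tB (v w : V n) : F := if traceIP v w = 0 then 0 else 1

lemma algebraMap_tB (v w : V n) : algebraMap F K (tB v w) = traceIP v w := by
  unfold tB
  rcases traceIP_zero_or_one v w with h | h <;> simp [tB, h]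

lemma injι : Function.Injective (algebraMap F K) := (algebraMap F K).injective

lemma tB_eq_zero_iff {v w : V n} : tB v w = 0 ↔ traceIP v w = 0 := by
  constructor
  · intro h
    have := algebraMap_tB v w
    rw [h, map_zero] at this
    exact this.symm
  · intro h; simp [tB, h]

lemma zmod2_cases (c : F) : c = 0 ∨ c = 1 := by revert c; decide

lemma tB_add_left (u v w : V n) : tB (u + v) w = tB u w + tB v w := by
  apply injι
  rw [map_add, algebraMap_tB, algebraMap_tB, algebraMap_tB, traceIP_add_left]

lemma tB_add_right (u v w : V n) : tB u (v + w) = tB u v + tB u w := by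
  apply injι
  rw [map_add, algebraMap_tB, algebraMap_tB, algebraMap_tB, traceIP_add_right]

lemma tB_smul_left (c : F) (v w : V n) : tB (c • v) w = c * tB v w := by
  rcases zmod2_cases c with h | h <;> subst h
  · rw [zero_smul, zero_mul, tB_eq_zero_iff, traceIP_zero_left]
  · rw [one_smul, one_mul]

lemma tB_smul_right (c : F) (v w : V n) : tB v (c • w) = c * tB v w := by
  have h1 : tB v (c • w) = tB (c • w) v := by
    apply injι; rw [algebraMap_tB, algebraMap_tB, traceIP_swap]
  have h2 : tB v w = tB w v := by
    apply injι; rw [algebraMap_tB, algebraMap_tB, traceIP_swap]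
  rw [h1, h2, tB_smul_left]

/-- The trace form as a bilinear form over `ZMod 2`. -/
noncomputable def B : LinearMap.BilinForm F (V n) :=
  LinearMap.mk₂ F tB tB_add_left tB_smul_left tB_add_right tB_smul_right

lemma B_apply (v w : V n) : B v w = tB v w := rfl

lemma B_eq_zero_iff {v w : V n} : B v w = 0 ↔ traceIP v w = 0 := tB_eq_zero_iff

lemma B_self (v : V n) : B v v = 0 := B_eq_zero_iff.mpr (traceIP_self v)

lemma B_isRefl : (B (n := n)).IsRefl := by
  intro v w h
  rw [B_apply, tB_eq_zero_iff] at h ⊢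
  rw [traceIP_swap]; exact h

lemma isSO_iff (C : Submodule F (V n)) :
    IsSelfOrthogonal C ↔ ∀ v ∈ C, ∀ w ∈ C, B v w = 0 := by
  unfold IsSelfOrthogonal
  exact forall₂_congr fun v _ => forall₂_congr fun w _ => (B_eq_zero_iff).symm.symm |>.symm


lemma exists_trace_ne_zero : ∃ y : K, y + y ^ 2 ≠ 0 := by
  by_contra hcon
  push_neg at hcon
  have hroots : ∀ y : K, y ^ 2 = y := by
    intro y
    have := hcon y
    have h2 : y ^ 2 = -y := by linear_combination this
    rw [h2, CharTwo.neg_eq]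
  -- then every element is a root of X^2 - X, which has at most 2 roots
  classical
  set p : Polynomial K := Polynomial.X ^ 2 - Polynomial.X with hp
  have hpne : p ≠ 0 := by
    intro h
    have h2 : (Polynomial.X ^ 2 - Polynomial.X : Polynomial K).natDegree = 2 := by
      compute_degree!
    rw [hp] at h
    rw [h] at h2
    simp at h2
  have hsub : Finset.univ ⊆ p.roots.toFinset := by
    intro y _
    rw [Multiset.mem_toFinset, Polynomial.mem_roots hpne]
    simp [hp, Polynomial.IsRoot, hroots y]
  have h4 : (4 : ℕ) ≤ p.roots.toFinset.card := by
    calc (4:ℕ) = Fintype.card K := fintype_card_K.symm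
    _ = Finset.univ.card := (Finset.card_univ).symm
    _ ≤ p.roots.toFinset.card := Finset.card_le_card hsub
  have h5 : p.roots.toFinset.card ≤ p.natDegree := by
    calc p.roots.toFinset.card ≤ Multiset.card p.roots := p.roots.toFinset_card_le
    _ ≤ p.natDegree := p.card_roots'
  have h6 : p.natDegree = 2 := by rw [hp]; compute_degree!
  omega

lemma square_surj (y : K) : (y ^ 2) ^ 2 = y := sq_sq y

lemma B_nondegenerate : (B (n := n)).Nondegenerate := by
  refine (B_isRefl.nondegenerate_iff_separatingLeft).mpr ?_
  intro v hv
  by_contra hvne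
  obtain ⟨i, hi⟩ : ∃ i, v i ≠ 0 := by
    by_contra h
    push_neg at h
    exact hvne (funext h)
  obtain ⟨y, hy⟩ := exists_trace_ne_zero
  -- take w = single i c with c^2 = y / v i
  set c : K := (y / v i) ^ 2 with hc
  set w : V n := Pi.single i c with hw
  have hsum : (∑ j, v j * w j ^ 2) = y := by
    rw [hw]
    rw [Finset.sum_eq_single i]
    · rw [Pi.single_eq_same, hc, sq_sq, mul_div_cancel₀ _ hi]
    · intro j _ hj
      rw [Pi.single_eq_of_ne hj]
      ring
    · intro h
      exact absurd (Finset.mem_univ i) h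
  have := hv w
  rw [B_apply, tB_eq_zero_iff] at this
  unfold traceIP at this
  rw [hsum] at this
  exact hy this

lemma finrank_V : finrank F (V n) = 2 * n := by
  rw [Module.finrank_pi_fintype]
  simp [GaloisField.finrank 2 (by norm_num : 2 ≠ 0)]
  ring

noncomputable instance : Fintype (V n) := Fintype.ofFinite _

instance : Finite (Submodule F (V n)) :=
  Finite.of_injective _ (SetLike.coe_injective (A := Submodule F (V n)))

noncomputable instance : Fintype (Submodule F (V n)) := Fintype.ofFinite _

lemma card_submodule (C : Submodule F (V n)) : Nat.card C = 2 ^ finrank F C := by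
  have : Fintype C := Fintype.ofFinite _
  rw [Nat.card_eq_fintype_card, card_eq_pow_finrank (K := F) (V := C), ZMod.card]

open scoped Classical in
lemma card_filter_mem (C : Submodule F (V n)) :
    (Finset.univ.filter (fun x => x ∈ C)).card = 2 ^ finrank F C := by
  rw [← card_submodule C, Nat.card_eq_fintype_card, Fintype.card_subtype]

lemma finrank_orthogonal' (C : Submodule F (V n)) :
    finrank F (B.orthogonal C) = 2 * n - finrank F C := by
  rw [LinearMap.BilinForm.finrank_orthogonal B_nondegenerate C, finrank_V]


lemma zmod2_ne_zero (a : F) (h : a ≠ 0) : a = 1 := by revert a; decide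

instance (M : Type*) [AddCommGroup M] [Module F M] [Finite M] :
    Finite (Module.Dual F M) :=
  Finite.of_injective (fun f => (f : M → F)) DFunLike.coe_injective

lemma card_fmodule (M : Type*) [AddCommGroup M] [Module F M] [Finite M] :
    Nat.card M = 2 ^ finrank F M := by
  have : Fintype M := Fintype.ofFinite _
  haveI : Module.Finite F M := Module.Finite.of_finite
  rw [Nat.card_eq_fintype_card, card_eq_pow_finrank (K := F) (V := M), ZMod.card]

lemma range_eq_top_of_ne_zero {M : Type*} [AddCommGroup M] [Module F M]
    (l : M →ₗ[F] F) (x : M) (hx : l x ≠ 0) : LinearMap.range l = ⊤ := by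
  rw [LinearMap.range_eq_top]
  intro y
  exact ⟨y • x, by rw [map_smul, smul_eq_mul, zmod2_ne_zero _ hx, mul_one]⟩

open scoped Classical in
/-- The self-orthogonal codes of dimension `t` containing `v`. -/
noncomputable def codes (n : ℕ) (v : V n) (t : ℕ) : Finset (Submodule F (V n)) :=
  Finset.univ.filter (fun C => IsSelfOrthogonal C ∧ finrank F C = t ∧ v ∈ C)

lemma mem_codes {v : V n} {t : ℕ} {C : Submodule F (V n)} :
    C ∈ codes n v t ↔ IsSelfOrthogonal C ∧ finrank F C = t ∧ v ∈ C := by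
  simp [codes]

lemma codes_one {v : V n} (hv : v ≠ 0) : codes n v 1 = {Submodule.span F {v}} := by
  ext C
  rw [mem_codes, Finset.mem_singleton]
  constructor
  · rintro ⟨hso, hrk, hmem⟩
    have hle : Submodule.span F {v} ≤ C := (Submodule.span_singleton_le_iff_mem v C).mpr hmem
    exact (Submodule.eq_of_le_of_finrank_le hle (by rw [hrk, finrank_span_singleton hv])).symm
  · rintro rfl
    refine ⟨?_, finrank_span_singleton hv, Submodule.mem_span_singleton_self v⟩
    rw [isSO_iff]
    intro x hx y hy
    rw [Submodule.mem_span_singleton] at hx hy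
    obtain ⟨a, rfl⟩ := hx; obtain ⟨b, rfl⟩ := hy
    rw [map_smul, map_smul, LinearMap.smul_apply, B_self]
    simp


set_option maxHeartbeats 1000000 in
open scoped Classical in
lemma count_subcodes {v : V n} (hv : v ≠ 0) (t : ℕ) (D : Submodule F (V n))
    (hD : finrank F D = t + 1) (hvD : v ∈ D) :
    (Finset.univ.filter
      (fun C : Submodule F (V n) => finrank F C = t ∧ v ∈ C ∧ C ≤ D)).card = 2 ^ t - 1 := by
  haveI : FiniteDimensional F (V n) := inferInstance
  set vD : D := ⟨v, hvD⟩ with hvDdef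
  have hvDne : vD ≠ 0 := fun h => hv (congrArg Subtype.val h)
  haveI : Fintype (Module.Dual F D) := Fintype.ofFinite _
  haveI : DecidableEq (Module.Dual F D) := Classical.decEq _
  set Ef : Finset (Module.Dual F D) :=
    Finset.univ.filter (fun f => f vD = 0 ∧ f ≠ 0) with hEf
  -- the bijection f ↦ (ker f).map D.subtype
  have hbij : Ef.card =
      (Finset.univ.filter
        (fun C : Submodule F (V n) => finrank F C = t ∧ v ∈ C ∧ C ≤ D)).card := by
    apply Finset.card_bij (fun f _ => (LinearMap.ker f).map D.subtype)
    · -- maps into the target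
      intro f hf
      rw [hEf, Finset.mem_filter] at hf
      obtain ⟨-, hf0, hfne⟩ := hf
      rw [Finset.mem_filter]
      refine ⟨Finset.mem_univ _, ?_, ?_, Submodule.map_subtype_le D _⟩
      · -- finrank of the kernel
        rw [Submodule.finrank_map_subtype_eq]
        obtain ⟨x, hx⟩ : ∃ x, f x ≠ 0 := by
          by_contra hcon
          push_neg at hcon
          exact hfne (LinearMap.ext fun x => hcon x)
        have hrange : LinearMap.range f = ⊤ := range_eq_top_of_ne_zero f x hx
        have hrn := LinearMap.finrank_range_add_finrank_ker f
        rw [hrange, finrank_top, Module.finrank_self, hD] at hrn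
        omega
      · rw [Submodule.mem_map]
        exact ⟨vD, LinearMap.mem_ker.mpr hf0, rfl⟩
    · -- injective
      intro f hf g hg hfg
      rw [hEf, Finset.mem_filter] at hf hg
      have hker : LinearMap.ker f = LinearMap.ker g :=
        Submodule.map_injective_of_injective D.injective_subtype hfg
      ext x
      by_cases hx : x ∈ LinearMap.ker f
      · have hx' : x ∈ LinearMap.ker g := hker ▸ hx
        rw [LinearMap.mem_ker] at hx hx'
        rw [hx, hx']
      · have hx' : x ∉ LinearMap.ker g := hker ▸ hx
        rw [LinearMap.mem_ker] at hx hx'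
        rw [zmod2_ne_zero _ hx, zmod2_ne_zero _ hx']
    · -- surjective
      intro C hC
      rw [Finset.mem_filter] at hC
      obtain ⟨-, hCrank, hvC, hCD⟩ := hC
      set C' : Submodule F D := C.comap D.subtype with hC'
      have hmap : C'.map D.subtype = C := by
        rw [hC', Submodule.map_comap_subtype, inf_eq_right.mpr hCD]
      have hC'rank : finrank F C' = t := by
        rw [← hCrank, ← hmap, Submodule.finrank_map_subtype_eq]
      have hQrank : finrank F (D ⧸ C') = 1 := by
        have := Submodule.finrank_quotient_add_finrank C'
        rw [hC'rank, hD] at this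
        omega
      obtain ⟨b⟩ := (finrank_eq_one_iff (Fin 1)).mp hQrank
      set e : (D ⧸ C') ≃ₗ[F] F :=
        b.equivFun.trans (LinearEquiv.funUnique (Fin 1) F F) with he
      set f : Module.Dual F D := (e : (D ⧸ C') →ₗ[F] F).comp C'.mkQ with hfdef
      have hkerf : LinearMap.ker f = C' := by
        rw [hfdef, LinearMap.ker_comp, LinearEquiv.ker, Submodule.comap_bot,
          Submodule.ker_mkQ]
      refine ⟨f, ?_, by rw [hkerf, hmap]⟩
      rw [hEf, Finset.mem_filter]
      refine ⟨Finset.mem_univ _, ?_, ?_⟩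
      · have : vD ∈ LinearMap.ker f := by rw [hkerf, hC']; exact hvC
        rwa [LinearMap.mem_ker] at this
      · intro hf0
        have : LinearMap.ker f = ⊤ := by rw [hf0]; exact LinearMap.ker_zero
        rw [hkerf] at this
        have : finrank F C' = finrank F D := by rw [this, finrank_top]
        rw [hC'rank, hD] at this
        omega
  rw [← hbij]
  -- now count the functionals
  set lv : Module.Dual F D →ₗ[F] F := LinearMap.applyₗ vD with hlv
  have hlvx : ∀ f : Module.Dual F D, lv f = f vD := fun f => rfl
  have hrange : LinearMap.range lv = ⊤ := by
    obtain ⟨f, hf⟩ : ∃ f : Module.Dual F D, f vD ≠ 0 := by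
      simpa using (Module.forall_dual_apply_eq_zero_iff F vD).not.mpr hvDne
    exact range_eq_top_of_ne_zero lv f (by rwa [hlvx])
  have hkerrank : finrank F (LinearMap.ker lv) = t := by
    have hrn := LinearMap.finrank_range_add_finrank_ker lv
    rw [hrange, finrank_top, Module.finrank_self, Subspace.dual_finrank_eq, hD] at hrn
    omega
  have hkercard :
      (Finset.univ.filter (fun f : Module.Dual F D => f vD = 0)).card = 2 ^ t := by
    have h1 : Nat.card (LinearMap.ker lv) = 2 ^ t := by
      rw [card_fmodule, hkerrank]
    rw [← h1, Nat.card_eq_fintype_card, Fintype.card_subtype]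
    congr 1
    apply Finset.filter_congr
    intro f _
    rw [LinearMap.mem_ker, hlvx]
  have hEfcard : Ef = (Finset.univ.filter
      (fun f : Module.Dual F D => f vD = 0)).erase 0 := by
    ext f
    rw [hEf, Finset.mem_filter, Finset.mem_erase, Finset.mem_filter]
    tauto
  rw [hEfcard, Finset.card_erase_of_mem (by simp), hkercard]


set_option maxHeartbeats 1000000 in
open scoped Classical in
lemma count_extensions {v : V n} (t : ℕ) (htn : t < n) (C : Submodule F (V n))
    (hC : C ∈ codes n v t) :
    ((codes n v (t + 1)).filter (fun D => C ≤ D)).card = 2 ^ (2 * n - 2 * t) - 1 := by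
  obtain ⟨hCso, hCrank, hvC⟩ := mem_codes.mp hC
  have hCso' := (isSO_iff C).mp hCso
  set O : Submodule F (V n) := B.orthogonal C with hO
  have hCO : C ≤ O := by
    intro x hx
    rw [hO, LinearMap.BilinForm.mem_orthogonal_iff]
    intro c hc
    exact hCso' c hc x hx
  have hOrank : finrank F O = 2 * n - t := by
    rw [hO, finrank_orthogonal', hCrank]
  set Of : Finset (V n) := Finset.univ.filter (fun x => x ∈ O) with hOf
  set Cf : Finset (V n) := Finset.univ.filter (fun x => x ∈ C) with hCf
  have hsubset : Cf ⊆ Of := by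
    intro x hx
    rw [hCf, Finset.mem_filter] at hx
    rw [hOf, Finset.mem_filter]
    exact ⟨hx.1, hCO hx.2⟩
  set Xf : Finset (V n) := Of \ Cf with hXf
  have hXcard : Xf.card = 2 ^ (2 * n - t) - 2 ^ t := by
    rw [hXf, Finset.card_sdiff_of_subset hsubset, hOf, hCf, card_filter_mem, card_filter_mem,
      hOrank, hCrank]
  set g : V n → Submodule F (V n) := fun w => C ⊔ Submodule.span F {w} with hg
  -- rank of extensions
  have hrank : ∀ w : V n, w ∉ C → finrank F (g w) = t + 1 := by
    intro w hw
    have hwne : w ≠ 0 := fun h => hw (h ▸ C.zero_mem)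
    have hinf : C ⊓ Submodule.span F {w} = ⊥ := by
      rw [eq_bot_iff]
      intro x hx
      obtain ⟨hx1, hx2⟩ := Submodule.mem_inf.mp hx
      rw [Submodule.mem_span_singleton] at hx2
      obtain ⟨a, rfl⟩ := hx2
      rcases zmod2_cases a with rfl | rfl
      · rw [zero_smul]; exact Submodule.zero_mem ⊥
      · rw [one_smul] at hx1 ⊢; exact absurd hx1 hw
    have := Submodule.finrank_sup_add_finrank_inf_eq C (Submodule.span F {w})
    rw [hinf, finrank_bot, hCrank, finrank_span_singleton hwne] at this
    show finrank F ↥(C ⊔ Submodule.span F {w}) = t + 1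
    omega
  -- the fibration
  have hmaps : ∀ w ∈ Xf, g w ∈ (codes n v (t + 1)).filter (fun D => C ≤ D) := by
    intro w hwX
    rw [hXf, Finset.mem_sdiff, hOf, hCf, Finset.mem_filter, Finset.mem_filter] at hwX
    obtain ⟨⟨-, hwO⟩, hwC⟩ := hwX
    have hwC' : w ∉ C := fun h => hwC ⟨Finset.mem_univ w, h⟩
    rw [Finset.mem_filter, mem_codes]
    have hBw : ∀ c ∈ C, B c w = 0 := by
      rw [hO, LinearMap.BilinForm.mem_orthogonal_iff] at hwO
      exact fun c hc => hwO c hc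
    refine ⟨⟨?_, hrank w hwC', (le_sup_left : C ≤ C ⊔ Submodule.span F {w}) hvC⟩,
      le_sup_left⟩
    rw [isSO_iff]
    intro x hx y hy
    obtain ⟨c, hc, z, hz, rfl⟩ := Submodule.mem_sup.mp hx
    obtain ⟨c', hc', z', hz', rfl⟩ := Submodule.mem_sup.mp hy
    rw [Submodule.mem_span_singleton] at hz hz'
    obtain ⟨a, rfl⟩ := hz
    obtain ⟨b, rfl⟩ := hz'
    have h1 : B c c' = 0 := hCso' c hc c' hc'
    have h2 : B c w = 0 := hBw c hc
    have h3 : B w c' = 0 := B_isRefl c' w (hBw c' hc')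
    have h4 : B w w = 0 := B_self w
    simp [map_add, map_smul, LinearMap.add_apply, LinearMap.smul_apply, h1, h2, h3, h4]
  have hfib : ∀ D ∈ (codes n v (t + 1)).filter (fun D => C ≤ D),
      Xf.filter (fun w => g w = D) =
        (Finset.univ.filter (fun x => x ∈ D)) \ Cf := by
    intro D hD
    rw [Finset.mem_filter, mem_codes] at hD
    obtain ⟨⟨hDso, hDrank, hvD⟩, hCD⟩ := hD
    have hDso' := (isSO_iff D).mp hDso
    ext w
    simp only [hXf, hOf, hCf, Finset.mem_filter, Finset.mem_sdiff, Finset.mem_univ,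
      true_and]
    constructor
    · rintro ⟨⟨hwO, hwC⟩, hgw⟩
      refine ⟨?_, hwC⟩
      rw [← hgw]
      exact (le_sup_right : Submodule.span F {w} ≤ C ⊔ Submodule.span F {w})
        (Submodule.mem_span_singleton_self w)
    · rintro ⟨hwD, hwC⟩
      have hwO : w ∈ O := by
        rw [hO, LinearMap.BilinForm.mem_orthogonal_iff]
        intro c hc
        exact hDso' c (hCD hc) w hwD
      refine ⟨⟨hwO, hwC⟩, ?_⟩
      have hle : g w ≤ D :=
        sup_le hCD ((Submodule.span_singleton_le_iff_mem w D).mpr hwD)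
      exact Submodule.eq_of_le_of_finrank_le hle (by rw [hDrank, hrank w hwC])
  have hsum := Finset.card_eq_sum_card_fiberwise hmaps
  have hconst : ∀ D ∈ (codes n v (t + 1)).filter (fun D => C ≤ D),
      (Xf.filter (fun w => g w = D)).card = 2 ^ t := by
    intro D hD
    have hD' := hD
    rw [Finset.mem_filter, mem_codes] at hD'
    obtain ⟨⟨-, hDrank, -⟩, hCD⟩ := hD'
    rw [hfib D hD, Finset.card_sdiff_of_subset, card_filter_mem, card_filter_mem, hCrank, hDrank]
    · rw [pow_succ]; omega
    · intro x hx
      rw [hCf, Finset.mem_filter] at hx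
      rw [Finset.mem_filter]
      exact ⟨hx.1, hCD hx.2⟩
  rw [Finset.sum_congr rfl hconst, Finset.sum_const, smul_eq_mul] at hsum
  rw [hXcard] at hsum
  -- now solve for the fiber count
  have hpow : 2 ^ (2 * n - t) = 2 ^ (2 * n - 2 * t) * 2 ^ t := by
    rw [← pow_add]
    congr 1
    omega
  have h1 : 2 ^ (2 * n - t) - 2 ^ t = (2 ^ (2 * n - 2 * t) - 1) * 2 ^ t := by
    rw [hpow, Nat.sub_mul, one_mul]
  rw [h1] at hsum
  exact (Nat.eq_of_mul_eq_mul_right (Nat.two_pow_pos t) hsum.symm)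


set_option maxHeartbeats 1000000 in
open scoped Classical in
lemma step {v : V n} (hv : v ≠ 0) (t : ℕ) (ht1 : 1 ≤ t) (htn : t < n) :
    (codes n v (t + 1)).card * (2 ^ t - 1) =
      (codes n v t).card * (2 ^ (2 * n - 2 * t) - 1) := by
  -- For D ∈ codes (t+1), the subcodes of dimension t containing v
  have hsub : ∀ D ∈ codes n v (t + 1),
      ((codes n v t).filter (fun C => C ≤ D)).card = 2 ^ t - 1 := by
    intro D hD
    obtain ⟨hDso, hDrank, hvD⟩ := mem_codes.mp hD
    rw [← count_subcodes hv t D hDrank hvD]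
    congr 1
    ext C
    rw [Finset.mem_filter, mem_codes, Finset.mem_filter]
    constructor
    · rintro ⟨⟨hCso, hCrank, hvC⟩, hCD⟩
      exact ⟨Finset.mem_univ C, hCrank, hvC, hCD⟩
    · rintro ⟨-, hCrank, hvC, hCD⟩
      exact ⟨⟨fun x hx y hy => hDso x (hCD hx) y (hCD hy), hCrank, hvC⟩, hCD⟩
  -- double counting
  have hdc : ∑ D ∈ codes n v (t + 1), ((codes n v t).filter (fun C => C ≤ D)).card =
      ∑ C ∈ codes n v t, ((codes n v (t + 1)).filter (fun D => C ≤ D)).card := by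
    simp_rw [Finset.card_filter]
    rw [Finset.sum_comm]
  rw [Finset.sum_congr rfl hsub, Finset.sum_const, smul_eq_mul] at hdc
  rw [Finset.sum_congr rfl (fun C hC => count_extensions t htn C hC), Finset.sum_const,
    smul_eq_mul] at hdc
  exact hdc

lemma codes_card_rat {v : V n} (hv : v ≠ 0) :
    ∀ t, 1 ≤ t → t ≤ n → ((codes n v t).card : ℚ) =
      ∏ r ∈ Finset.Ico 1 t, ((2:ℚ) ^ (2 * (n - r)) - 1) / ((2:ℚ) ^ r - 1) := by
  intro t
  induction t with
  | zero => intro h; omega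
  | succ t ih =>
    intro h1 h2
    rcases Nat.eq_or_lt_of_le h1 with heq | hlt
    · -- t + 1 = 1, i.e. t = 0
      have ht0 : t = 0 := by omega
      subst ht0
      rw [codes_one hv]
      simp
    · have ht1 : 1 ≤ t := by omega
      have htn : t < n := by omega
      have hstep := step hv t ht1 htn
      have hprev := ih ht1 (by omega)
      -- cast to ℚ
      have hc : ((codes n v (t + 1)).card : ℚ) * ((2:ℚ) ^ t - 1) =
          ((codes n v t).card : ℚ) * ((2:ℚ) ^ (2 * (n - t)) - 1) := by
        have hexp : 2 * n - 2 * t = 2 * (n - t) := by omega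
        rw [hexp] at hstep
        have hcast := congrArg (fun m : ℕ => (m : ℚ)) hstep
        simp only [Nat.cast_mul] at hcast
        rw [Nat.cast_sub Nat.one_le_two_pow, Nat.cast_sub Nat.one_le_two_pow] at hcast
        push_cast at hcast
        exact hcast
      have hne : (2:ℚ) ^ t - 1 ≠ 0 := by
        have : (1:ℚ) < 2 ^ t := by
          calc (1:ℚ) < 2 := by norm_num
          _ = 2 ^ 1 := (pow_one 2).symm
          _ ≤ 2 ^ t := by
            apply pow_le_pow_right₀ (by norm_num) ht1
        intro h
        rw [sub_eq_zero] at h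
        rw [← h] at this
        exact lt_irrefl _ this
      rw [Finset.prod_Ico_succ_top ht1, ← hprev, ← mul_div_assoc, eq_div_iff hne]
      exact hc

end SOCaux


set_option maxHeartbeats 1000000 in
/-- Every nonzero `v ∈ F₄ⁿ` is contained in exactly
`L(n,t) = ∏_{r=1}^{t-1} (2^{2(n-r)} - 1)/(2^r - 1)` additive self-orthogonal codes
of size `2^t`. -/
theorem count_self_orthogonal_codes_containing_vector (n t : ℕ) (ht1 : 1 ≤ t) (ht : t ≤ n)
    (v : Fin n → GaloisField 2 2) (hv : v ≠ 0) :
    (Nat.card {C : Submodule (ZMod 2) (Fin n → GaloisField 2 2) //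
        IsSelfOrthogonal C ∧ Nat.card C = 2^t ∧ v ∈ C} : ℚ)
      = ∏ r ∈ Finset.Ico 1 t, ((2:ℚ)^(2*(n-r)) - 1) / ((2:ℚ)^r - 1) := by
  classical
  have hpred : ∀ C : Submodule (ZMod 2) (Fin n → GaloisField 2 2),
      (Nat.card C = 2 ^ t) ↔ Module.finrank (ZMod 2) C = t := by
    intro C
    rw [SOCaux.card_submodule]
    constructor
    · intro h
      exact Nat.pow_right_injective (le_refl 2) h
    · intro h
      rw [h]
  have hcount : Nat.card {C : Submodule (ZMod 2) (Fin n → GaloisField 2 2) //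
      IsSelfOrthogonal C ∧ Nat.card C = 2^t ∧ v ∈ C} = (SOCaux.codes n v t).card := by
    rw [Nat.card_eq_fintype_card, Fintype.card_subtype]
    congr 1
    ext C
    simp only [Finset.mem_filter, SOCaux.mem_codes, Finset.mem_univ, true_and]
    rw [hpred C]
  rw [hcount]
  exact SOCaux.codes_card_rat hv t ht1 ht
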